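/- Let M be an n×n complex matrix all of whose eigenvalues have strictly negative real part. Define R = ∫₀^∞ (e^{sM})* e^{sM} ds. Then the integral converges, R is Hermitian positive definite, and RM + M*R = -I. -/

import Mathlib

open scoped Matrix.Norms.L2Operator ComplexOrder
open MeasureTheory NormedSpace Matrix
open scoped ENNReal NNReal

variable {n : ℕ}

private lemma pow_mulVec_eig (M : Matrix (Fin n) (Fin n) ℂ) {v : Fin n → ℂ} {μ : ℂ}
    (h : M.mulVec v = μ • v) (k : ℕ) : (M ^ k).mulVec v = μ ^ k • v := by
  induction k with
  | zero => simp
  | succ k ih =>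
      rw [pow_succ, ← Matrix.mulVec_mulVec, h, Matrix.mulVec_smul, ih, smul_smul, pow_succ,
        mul_comm]

private noncomputable def mulVecCLM (v : Fin n → ℂ) : Matrix (Fin n) (Fin n) ℂ →L[ℂ] (Fin n → ℂ) :=
  LinearMap.toContinuousLinearMap
    { toFun := fun A => A.mulVec v
      map_add' := fun A B => Matrix.add_mulVec A B v
      map_smul' := fun c A => Matrix.smul_mulVec c A v }

private lemma exp_mulVec_eig (M : Matrix (Fin n) (Fin n) ℂ) {v : Fin n → ℂ} {μ : ℂ}
    (h : M.mulVec v = μ • v) : (exp M).mulVec v = Complex.exp μ • v := by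
  have h1 : HasSum (fun k : ℕ => ((k.factorial : ℂ))⁻¹ • M ^ k) (exp M) := exp_series_hasSum_exp' (𝕂 := ℂ) M
  have h2 := h1.mapL (mulVecCLM v)
  have hcoe : ∀ A : Matrix (Fin n) (Fin n) ℂ, (mulVecCLM v) A = A.mulVec v := fun A => rfl
  have h3 : HasSum (fun k : ℕ => (((k.factorial : ℂ))⁻¹ * μ ^ k) • v) ((mulVecCLM v) (exp M)) := by
    refine h2.congr_fun fun k => ?_
    rw [_root_.map_smul, hcoe, pow_mulVec_eig M h, smul_smul]
  have h4 : HasSum (fun k : ℕ => ((k.factorial : ℂ))⁻¹ * μ ^ k) (exp μ) := by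
    simpa [smul_eq_mul] using exp_series_hasSum_exp' (𝕂 := ℂ) μ
  have h5 := h4.smul_const v
  rw [hcoe] at h3
  rw [h3.unique h5, Complex.exp_eq_exp_ℂ]

private lemma aeval_mulVec_eig (M : Matrix (Fin n) (Fin n) ℂ) {v : Fin n → ℂ} {μ : ℂ}
    (h : M.mulVec v = μ • v) (p : Polynomial ℂ) :
    (Polynomial.aeval M p).mulVec v = p.eval μ • v := by
  induction p using Polynomial.induction_on' with
  | add p q hp hq => rw [map_add, Matrix.add_mulVec, hp, hq, Polynomial.eval_add, add_smul]
  | monomial k c =>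
      rw [Polynomial.aeval_monomial, Polynomial.eval_monomial, Algebra.algebraMap_eq_smul_one,
        smul_mul_assoc, one_mul, Matrix.smul_mulVec, pow_mulVec_eig M h, smul_smul]

private lemma exp_eq_aeval (M : Matrix (Fin n) (Fin n) ℂ) :
    ∃ p : Polynomial ℂ, exp M = Polynomial.aeval M p := by
  have hmem : exp M ∈ Submodule.span ℂ (Set.range fun k : ℕ => M ^ k) := by
    set S := Submodule.span ℂ (Set.range fun k : ℕ => M ^ k) with hS
    have hclosed : IsClosed (S : Set (Matrix (Fin n) (Fin n) ℂ)) :=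
      Submodule.closed_of_finiteDimensional S
    have h1 : HasSum (fun k : ℕ => ((k.factorial : ℂ))⁻¹ • M ^ k) (exp M) := exp_series_hasSum_exp' (𝕂 := ℂ) M
    refine hclosed.mem_of_tendsto h1 (Filter.Eventually.of_forall fun s => ?_)
    exact Submodule.sum_mem _ fun k _ =>
      Submodule.smul_mem _ _ (Submodule.subset_span ⟨k, rfl⟩)
  rw [Finsupp.mem_span_range_iff_exists_finsupp] at hmem
  obtain ⟨c, hc⟩ := hmem
  refine ⟨c.sum fun k a => Polynomial.C a * Polynomial.X ^ k, ?_⟩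
  rw [← hc, Finsupp.sum, Finsupp.sum, map_sum]
  refine Finset.sum_congr rfl fun k _ => ?_
  rw [_root_.map_mul, Polynomial.aeval_C, map_pow, Polynomial.aeval_X, Algebra.algebraMap_eq_smul_one,
    smul_mul_assoc, one_mul]

private lemma exists_eigenvector (M : Matrix (Fin n) (Fin n) ℂ) {μ : ℂ}
    (hμ : μ ∈ spectrum ℂ M) : ∃ v : Fin n → ℂ, v ≠ 0 ∧ M.mulVec v = μ • v := by
  rw [spectrum.mem_iff] at hμ
  rw [Matrix.isUnit_iff_isUnit_det] at hμ
  have hdet : ((algebraMap ℂ (Matrix (Fin n) (Fin n) ℂ)) μ - M).det = 0 := by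
    by_contra h; exact hμ (isUnit_iff_ne_zero.mpr h)
  obtain ⟨v, hv0, hv⟩ := Matrix.exists_mulVec_eq_zero_iff.mpr hdet
  refine ⟨v, hv0, ?_⟩
  rw [Matrix.sub_mulVec] at hv
  have : (algebraMap ℂ (Matrix (Fin n) (Fin n) ℂ)) μ = μ • 1 := by
    rw [Algebra.algebraMap_eq_smul_one]
  rw [this, Matrix.smul_mulVec, Matrix.one_mulVec] at hv
  rw [sub_eq_zero] at hv
  exact hv.symm

private lemma norm_spec_exp_lt_one (M : Matrix (Fin n) (Fin n) ℂ)
    (hspec : ∀ μ ∈ spectrum ℂ M, μ.re < 0) :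
    ∀ ν ∈ spectrum ℂ (exp M), ‖ν‖ < 1 := by
  obtain ⟨p, hp⟩ := exp_eq_aeval M
  intro ν hν
  rcases Nat.eq_zero_or_pos n with hn | hn
  · exfalso
    subst hn
    rw [spectrum.mem_iff] at hν
    exact hν (isUnit_of_subsingleton _)
  · haveI : Nonempty (Fin n) := ⟨⟨0, hn⟩⟩
    have hne : (spectrum ℂ M).Nonempty := spectrum.nonempty M
    rw [hp, spectrum.map_polynomial_aeval_of_nonempty M p hne] at hν
    obtain ⟨μ, hμ, rfl⟩ := hν
    obtain ⟨v, hv0, hv⟩ := exists_eigenvector M hμ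
    have h1 : p.eval μ = Complex.exp μ := by
      have ha := aeval_mulVec_eig M hv p
      rw [← hp] at ha
      have hb := exp_mulVec_eig M hv
      have hc : p.eval μ • v = Complex.exp μ • v := ha.symm.trans hb
      exact smul_left_injective ℂ hv0 hc
    calc ‖(fun k => Polynomial.eval k p) μ‖ = Real.exp μ.re := by
          simp [h1, Complex.norm_exp]
      _ < 1 := Real.exp_lt_one_iff.mpr (hspec μ hμ)

private lemma spectralRadius_exp_lt (M : Matrix (Fin n) (Fin n) ℂ)
    (hspec : ∀ μ ∈ spectrum ℂ M, μ.re < 0) :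
    ∃ r : ℝ, 0 < r ∧ r < 1 ∧ spectralRadius ℂ (exp M) ≤ ENNReal.ofReal r := by
  rcases (spectrum ℂ (exp M)).eq_empty_or_nonempty with he | hne
  · refine ⟨1/2, by norm_num, by norm_num, ?_⟩
    rw [spectralRadius, he]
    simp
  · have hcpt : IsCompact (spectrum ℂ (exp M)) := spectrum.isCompact _
    obtain ⟨ν₀, hν₀, hmax'⟩ := hcpt.exists_isMaxOn hne continuous_norm.continuousOn
    have hmax : ∀ ν ∈ spectrum ℂ (exp M), ‖ν‖ ≤ ‖ν₀‖ := fun ν hν => hmax' hν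
    refine ⟨max ‖ν₀‖ (1/2), lt_max_of_lt_right (by norm_num),
      max_lt (norm_spec_exp_lt_one M hspec ν₀ hν₀) (by norm_num), ?_⟩
    rw [spectralRadius]
    refine iSup₂_le fun ν hν => ?_
    rw [← enorm_eq_nnnorm, ← ofReal_norm]
    exact ENNReal.ofReal_le_ofReal ((hmax ν hν).trans (le_max_left _ _))

private lemma exists_pow_bound (M : Matrix (Fin n) (Fin n) ℂ)
    (hspec : ∀ μ ∈ spectrum ℂ M, μ.re < 0) :
    ∃ r C : ℝ, 0 < r ∧ r < 1 ∧ 0 < C ∧ ∀ k : ℕ, ‖(exp M) ^ k‖ ≤ C * r ^ k := by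
  obtain ⟨r₀, hr₀0, hr₀1, hrad⟩ := spectralRadius_exp_lt M hspec
  set r := (1 + r₀) / 2 with hr_def
  have hr0 : 0 < r := by positivity
  have hr1 : r < 1 := by rw [hr_def]; linarith
  have hlt : spectralRadius ℂ (exp M) < ENNReal.ofReal r :=
    lt_of_le_of_lt hrad ((ENNReal.ofReal_lt_ofReal_iff hr0).mpr (by rw [hr_def]; linarith))
  have htend := spectrum.pow_nnnorm_pow_one_div_tendsto_nhds_spectralRadius (exp M)
  obtain ⟨N, hN⟩ := Filter.eventually_atTop.mp (htend.eventually_lt_const hlt)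
  have hbound : ∀ k : ℕ, N + 1 ≤ k → ‖(exp M) ^ k‖ ≤ r ^ k := by
    intro k hk
    have hk0 : (k : ℝ) ≠ 0 := Nat.cast_ne_zero.mpr (by omega)
    have h1 := (hN k (by omega)).le
    have h2 : (‖(exp M) ^ k‖₊ : ℝ≥0∞) ≤ ENNReal.ofReal r ^ (k : ℝ) := by
      calc (‖(exp M) ^ k‖₊ : ℝ≥0∞)
          = ((‖(exp M) ^ k‖₊ : ℝ≥0∞) ^ ((1 : ℝ) / k)) ^ (k : ℝ) := by
            rw [← ENNReal.rpow_mul, one_div, inv_mul_cancel₀ hk0, ENNReal.rpow_one]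
        _ ≤ ENNReal.ofReal r ^ (k : ℝ) :=
            ENNReal.rpow_le_rpow h1 (Nat.cast_nonneg k)
    rw [ENNReal.ofReal_rpow_of_pos hr0, ← enorm_eq_nnnorm, ← ofReal_norm,
      Real.rpow_natCast] at h2
    exact (ENNReal.ofReal_le_ofReal_iff (by positivity)).mp h2
  have hS : 0 ≤ ∑ j ∈ Finset.range (N + 1), ‖exp M ^ j‖ / r ^ j :=
    Finset.sum_nonneg fun j _ => by positivity
  refine ⟨r, 1 + ∑ j ∈ Finset.range (N + 1), ‖exp M ^ j‖ / r ^ j, hr0, hr1,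
    by linarith, fun k => ?_⟩
  rcases le_or_gt (N + 1) k with hk | hk
  · calc ‖exp M ^ k‖ ≤ r ^ k := hbound k hk
      _ ≤ _ := le_mul_of_one_le_left (by positivity) (by linarith)
  · rw [← div_le_iff₀ (by positivity)]
    have h3 := Finset.single_le_sum (f := fun j => ‖exp M ^ j‖ / r ^ j)
      (fun j _ => by positivity) (Finset.mem_range.mpr hk)
    linarith

private lemma exp_smul_decay (M : Matrix (Fin n) (Fin n) ℂ)
    (hspec : ∀ μ ∈ spectrum ℂ M, μ.re < 0) :
    ∃ K a : ℝ, 0 < K ∧ 0 < a ∧ ∀ s : ℝ, 0 ≤ s →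
      ‖exp (s • M)‖ ≤ K * Real.exp (-(a * s)) := by
  obtain ⟨r, C, hr0, hr1, hC, hpow⟩ := exists_pow_bound M hspec
  let +nondep : NormedAlgebra ℚ (Matrix (Fin n) (Fin n) ℂ) := .restrictScalars ℚ ℂ _
  have hcont : Continuous fun t : ℝ => exp (t • M) :=
    exp_continuous.comp (continuous_id.smul continuous_const)
  obtain ⟨C₁, hC₁⟩ :=
    (isCompact_Icc (a := (0:ℝ)) (b := 1)).exists_bound_of_continuousOn hcont.continuousOn
  set B := max C₁ 1 with hB_def
  have hB0 : 0 < B := lt_max_of_lt_right one_pos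
  set a := -Real.log r with ha_def
  have ha : 0 < a := by
    have := Real.log_neg hr0 hr1
    rw [ha_def]; linarith
  refine ⟨C * B / r, a, by positivity, ha, fun s hs => ?_⟩
  have hfloor_le : (⌊s⌋₊ : ℝ) ≤ s := Nat.floor_le hs
  have hlt_floor : s < ⌊s⌋₊ + 1 := Nat.lt_floor_add_one s
  have hsplit : exp (s • M) = (exp M) ^ ⌊s⌋₊ * exp ((s - ⌊s⌋₊) • M) := by
    rw [← NormedSpace.exp_nsmul, ← NormedSpace.exp_add_of_commute (((Commute.refl M).smul_left _).smul_right _)]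
    congr 1
    rw [← Nat.cast_smul_eq_nsmul ℝ, ← add_smul]
    congr 1
    ring
  have hfrac : ‖exp ((s - ⌊s⌋₊) • M)‖ ≤ B := by
    refine le_trans (hC₁ _ ⟨by linarith, by linarith⟩) (le_max_left _ _)
  have hrpow : r ^ ⌊s⌋₊ ≤ r ^ (s - 1 : ℝ) := by
    rw [← Real.rpow_natCast r ⌊s⌋₊]
    exact Real.rpow_le_rpow_of_exponent_ge hr0 hr1.le (by linarith)
  have hexp : r ^ (s - 1 : ℝ) = Real.exp (-(a * s)) / r := by
    rw [Real.rpow_def_of_pos hr0, eq_div_iff (ne_of_gt hr0)]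
    calc Real.exp (Real.log r * (s - 1)) * r
        = Real.exp (Real.log r * (s - 1)) * Real.exp (Real.log r) := by
          rw [Real.exp_log hr0]
      _ = Real.exp (Real.log r * (s - 1) + Real.log r) := (Real.exp_add _ _).symm
      _ = Real.exp (-(a * s)) := by rw [ha_def]; congr 1; ring
  calc ‖exp (s • M)‖
      = ‖(exp M) ^ ⌊s⌋₊ * exp ((s - ⌊s⌋₊) • M)‖ := by rw [hsplit]
    _ ≤ ‖(exp M) ^ ⌊s⌋₊‖ * ‖exp ((s - ⌊s⌋₊) • M)‖ := norm_mul_le _ _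
    _ ≤ (C * r ^ ⌊s⌋₊) * B :=
        mul_le_mul (hpow _) hfrac (norm_nonneg _) (by positivity)
    _ = (C * B) * r ^ ⌊s⌋₊ := by ring
    _ ≤ (C * B) * r ^ (s - 1 : ℝ) := by
        exact mul_le_mul_of_nonneg_left hrpow (by positivity)
    _ = C * B / r * Real.exp (-(a * s)) := by rw [hexp]; ring

private noncomputable def conjTransposeCLM :
    Matrix (Fin n) (Fin n) ℂ →L[ℝ] Matrix (Fin n) (Fin n) ℂ :=
  LinearMap.toContinuousLinearMap
    { toFun := fun A => Aᴴ
      map_add' := fun A B => Matrix.conjTranspose_add A B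
      map_smul' := fun c A => by
        ext i j
        simp [Matrix.conjTranspose_apply, star_smul] }

private noncomputable def dotCLM (x : Fin n → ℂ) :
    Matrix (Fin n) (Fin n) ℂ →L[ℂ] ℂ :=
  LinearMap.toContinuousLinearMap
    { toFun := fun A => dotProduct (star x) (A.mulVec x)
      map_add' := fun A B => by
        show star x ⬝ᵥ (A + B) *ᵥ x = star x ⬝ᵥ A *ᵥ x + star x ⬝ᵥ B *ᵥ x
        rw [Matrix.add_mulVec, dotProduct_add]
      map_smul' := fun c A => by
        show star x ⬝ᵥ (c • A) *ᵥ x = c • (star x ⬝ᵥ A *ᵥ x)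
        rw [Matrix.smul_mulVec, dotProduct_smul] }

/-- If all eigenvalues of the complex `n × n` matrix `M` have strictly
negative real part, then `R = ∫₀^∞ (e^{sM})* e^{sM} ds` converges, is Hermitian positive
definite, and satisfies the Lyapunov equation `R M + M* R = -I`. -/
theorem stmt0 (n : ℕ) (M : Matrix (Fin n) (Fin n) ℂ)
    (hspec : ∀ μ ∈ spectrum ℂ M, μ.re < 0) :
    IntegrableOn (fun s : ℝ => (NormedSpace.exp (s • M))ᴴ * NormedSpace.exp (s • M)) (Set.Ioi 0) volume ∧
    (∫ s in Set.Ioi (0:ℝ), (NormedSpace.exp (s • M))ᴴ * NormedSpace.exp (s • M)).IsHermitian ∧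
    (∫ s in Set.Ioi (0:ℝ), (NormedSpace.exp (s • M))ᴴ * NormedSpace.exp (s • M)).PosDef ∧
    (∫ s in Set.Ioi (0:ℝ), (NormedSpace.exp (s • M))ᴴ * NormedSpace.exp (s • M)) * M +
      Mᴴ * (∫ s in Set.Ioi (0:ℝ), (NormedSpace.exp (s • M))ᴴ * NormedSpace.exp (s • M)) = -1 := by
  classical
  let +nondep : NormedAlgebra ℚ (Matrix (Fin n) (Fin n) ℂ) := .restrictScalars ℚ ℂ _
  set E : ℝ → Matrix (Fin n) (Fin n) ℂ := fun s => exp (s • M) with hE_def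
  set f : ℝ → Matrix (Fin n) (Fin n) ℂ := fun s => (E s)ᴴ * E s with hf_def
  obtain ⟨K, a, hK, ha, hdecay⟩ := exp_smul_decay M hspec
  have hCT : ∀ A : Matrix (Fin n) (Fin n) ℂ, conjTransposeCLM A = Aᴴ := fun A => rfl
  have hEcont : Continuous E := exp_continuous.comp (continuous_id.smul continuous_const)
  have hEconjcont : Continuous fun s => (E s)ᴴ := by
    have h := conjTransposeCLM.continuous.comp hEcont
    exact h
  have hfcont : Continuous f := hEconjcont.mul hEcont
  haveI : NormedStarGroup (Matrix (Fin n) (Fin n) ℂ) := CStarRing.to_normedStarGroup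
  have hnorm_conj : ∀ s, ‖(E s)ᴴ‖ = ‖E s‖ := fun s => norm_star (E s)
  have hfbound : ∀ s : ℝ, 0 ≤ s → ‖f s‖ ≤ K ^ 2 * Real.exp (-(2 * a * s)) := by
    intro s hs
    have hmerge : Real.exp (-(a * s)) * Real.exp (-(a * s)) = Real.exp (-(2 * a * s)) := by
      rw [← Real.exp_add]; congr 1; ring
    calc ‖f s‖ ≤ ‖(E s)ᴴ‖ * ‖E s‖ := norm_mul_le _ _
      _ = ‖E s‖ * ‖E s‖ := by rw [hnorm_conj]
      _ ≤ (K * Real.exp (-(a * s))) * (K * Real.exp (-(a * s))) :=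
          mul_le_mul (hdecay s hs) (hdecay s hs) (norm_nonneg _) (by positivity)
      _ = K ^ 2 * (Real.exp (-(a * s)) * Real.exp (-(a * s))) := by ring
      _ = K ^ 2 * Real.exp (-(2 * a * s)) := by rw [hmerge]
  have hint : IntegrableOn f (Set.Ioi 0) volume := by
    have hg : IntegrableOn (fun s : ℝ => K ^ 2 * Real.exp (-(2 * a) * s)) (Set.Ioi 0) volume :=
      (exp_neg_integrableOn_Ioi 0 (by positivity)).const_mul _
    refine hg.mono' hfcont.aestronglyMeasurable.restrict ?_
    refine (ae_restrict_iff' measurableSet_Ioi).mpr (Filter.Eventually.of_forall fun s hs => ?_)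
    have := hfbound s (le_of_lt hs)
    calc ‖f s‖ ≤ K ^ 2 * Real.exp (-(2 * a * s)) := this
      _ = K ^ 2 * Real.exp (-(2 * a) * s) := by ring_nf
  set R := ∫ s in Set.Ioi (0:ℝ), f s with hR_def
  have hfherm : ∀ s, (f s)ᴴ = f s := fun s => by
    simp [hf_def, Matrix.conjTranspose_mul, Matrix.conjTranspose_conjTranspose]
  have hherm : R.IsHermitian := by
    show Rᴴ = R
    calc Rᴴ = conjTransposeCLM (∫ s in Set.Ioi (0:ℝ), f s) := rfl
      _ = ∫ s in Set.Ioi (0:ℝ), conjTransposeCLM (f s) :=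
          (conjTransposeCLM.integral_comp_comm hint).symm
      _ = ∫ s in Set.Ioi (0:ℝ), f s := by
          refine integral_congr_ae (Filter.Eventually.of_forall fun s => ?_)
          show conjTransposeCLM (f s) = f s
          rw [hCT, hfherm]
      _ = R := rfl
  -- derivative
  have hEderiv : ∀ s : ℝ, HasDerivAt E (E s * M) s := by
    intro s
    have h := hasDerivAt_exp_smul_const (𝕂 := ℝ) M s
    exact h
  have hderiv : ∀ s : ℝ, HasDerivAt f (Mᴴ * f s + f s * M) s := by
    intro s
    have h1 := hEderiv s
    have h2 : HasDerivAt (fun t => (E t)ᴴ) ((E s * M)ᴴ) s := by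
      have h := (conjTransposeCLM.hasFDerivAt (x := E s)).comp_hasDerivAt s h1
      exact h
    have h3 := h2.mul h1
    have h4 : (E s * M)ᴴ * E s + (E s)ᴴ * (E s * M) = Mᴴ * f s + f s * M := by
      rw [Matrix.conjTranspose_mul]
      noncomm_ring [hf_def]
    rw [h4] at h3
    exact h3
  have hf0 : f 0 = 1 := by
    simp [hf_def, hE_def]
  have hFTC : ∀ T : ℝ,
      Mᴴ * (∫ s in (0:ℝ)..T, f s) + (∫ s in (0:ℝ)..T, f s) * M = f T - 1 := by
    intro T
    have hii : IntervalIntegrable (fun s => Mᴴ * f s + f s * M) volume 0 T :=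
      ((continuous_const.mul hfcont).add (hfcont.mul continuous_const)).intervalIntegrable 0 T
    have h1 := intervalIntegral.integral_eq_sub_of_hasDerivAt (fun s _ => hderiv s) hii
    rw [hf0] at h1
    rw [← h1, intervalIntegral.integral_add (f := fun s => Mᴴ * f s) (g := fun s => f s * M)
      ((continuous_const.mul hfcont).intervalIntegrable 0 T)
      ((hfcont.mul continuous_const).intervalIntegrable 0 T)]
    congr 1
    · exact ((ContinuousLinearMap.mul ℂ (Matrix (Fin n) (Fin n) ℂ) Mᴴ).intervalIntegral_comp_comm
        (hfcont.intervalIntegrable 0 T)).symm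
    · exact (((ContinuousLinearMap.mul ℂ (Matrix (Fin n) (Fin n) ℂ)).flip M).intervalIntegral_comp_comm
        (hfcont.intervalIntegrable 0 T)).symm
  have hlim1 : Filter.Tendsto (fun T => ∫ s in (0:ℝ)..T, f s) Filter.atTop (nhds R) :=
    intervalIntegral_tendsto_integral_Ioi 0 hint Filter.tendsto_id
  have hflim : Filter.Tendsto f Filter.atTop (nhds 0) := by
    apply squeeze_zero_norm' (a := fun s => K ^ 2 * Real.exp (-(2 * a * s)))
    · filter_upwards [Filter.eventually_ge_atTop 0] with s hs using hfbound s hs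
    · have h1 : Filter.Tendsto (fun s : ℝ => 2 * a * s) Filter.atTop Filter.atTop :=
        Filter.Tendsto.const_mul_atTop (by positivity) Filter.tendsto_id
      have h2 := (Real.tendsto_exp_neg_atTop_nhds_zero.comp h1).const_mul (K ^ 2)
      simpa [Function.comp, mul_zero] using h2
  have hmain : Mᴴ * R + R * M = -1 := by
    have hL : Filter.Tendsto
        (fun T => Mᴴ * (∫ s in (0:ℝ)..T, f s) + (∫ s in (0:ℝ)..T, f s) * M)
        Filter.atTop (nhds (Mᴴ * R + R * M)) :=
      (tendsto_const_nhds.mul hlim1).add (hlim1.mul tendsto_const_nhds)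
    have hL' : Filter.Tendsto (fun T => f T - 1) Filter.atTop (nhds (Mᴴ * R + R * M)) :=
      hL.congr fun T => hFTC T
    have hRr : Filter.Tendsto (fun T => f T - 1) Filter.atTop (nhds (0 - 1)) :=
      hflim.sub tendsto_const_nhds
    have := tendsto_nhds_unique hL' hRr
    rwa [zero_sub] at this
  have hpos : R.PosDef := by
    refine Matrix.PosDef.of_dotProduct_mulVec_pos hherm fun x hx => ?_
    have hDot : ∀ A : Matrix (Fin n) (Fin n) ℂ,
        dotCLM x A = dotProduct (star x) (A.mulVec x) := fun A => rfl
    set y : ℝ → (Fin n → ℂ) := fun s => (E s).mulVec x with hy_def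
    have hy0 : ∀ s, y s ≠ 0 := by
      intro s h0
      apply hx
      have hunit : exp ((-s) • M) * exp (s • M) = 1 := by
        rw [← NormedSpace.exp_add_of_commute (((Commute.refl M).smul_left _).smul_right _), ← add_smul]
        simp
      calc x = (1 : Matrix (Fin n) (Fin n) ℂ).mulVec x := (Matrix.one_mulVec x).symm
        _ = (exp ((-s) • M)).mulVec ((exp (s • M)).mulVec x) := by
            rw [← hunit, ← Matrix.mulVec_mulVec]
        _ = 0 := by
            rw [show (exp (s • M)).mulVec x = y s from rfl, h0, Matrix.mulVec_zero]
    set g : ℝ → ℝ := fun s => ∑ i, Complex.normSq (y s i) with hg_def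
    have hfg : ∀ s, dotCLM x (f s) = ((g s : ℝ) : ℂ) := by
      intro s
      rw [hDot]
      have h1 : (f s).mulVec x = (E s)ᴴ.mulVec (y s) := by
        rw [hf_def, ← Matrix.mulVec_mulVec]
      rw [h1, Matrix.dotProduct_mulVec, ← Matrix.star_mulVec]
      rw [show (E s).mulVec x = y s from rfl]
      rw [dotProduct, hg_def]
      push_cast
      refine Finset.sum_congr rfl fun i _ => ?_
      rw [Pi.star_apply, Complex.normSq_eq_conj_mul_self, Complex.star_def]
    have hgpos : ∀ s, 0 < g s := by
      intro s
      obtain ⟨i, hi⟩ := Function.ne_iff.mp (hy0 s)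
      exact Finset.sum_pos' (fun j _ => Complex.normSq_nonneg _)
        ⟨i, Finset.mem_univ i, Complex.normSq_pos.mpr hi⟩
    have hintLx : Integrable (fun s => dotCLM x (f s)) (volume.restrict (Set.Ioi 0)) :=
      (dotCLM x).integrable_comp hint
    have hgint : IntegrableOn g (Set.Ioi 0) volume := by
      have h := Complex.reCLM.integrable_comp hintLx
      refine h.congr (Filter.Eventually.of_forall fun s => ?_)
      show Complex.reCLM (dotCLM x (f s)) = g s
      rw [show Complex.reCLM (dotCLM x (f s)) = (dotCLM x (f s)).re from rfl, hfg]
      exact Complex.ofReal_re _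
    have hval : dotProduct (star x) (R.mulVec x) = ((∫ s in Set.Ioi (0:ℝ), g s : ℝ) : ℂ) := by
      calc dotProduct (star x) (R.mulVec x) = dotCLM x R := (hDot R).symm
        _ = ∫ s in Set.Ioi (0:ℝ), dotCLM x (f s) := ((dotCLM x).integral_comp_comm hint).symm
        _ = ∫ s in Set.Ioi (0:ℝ), ((g s : ℝ) : ℂ) :=
            integral_congr_ae (Filter.Eventually.of_forall fun s => hfg s)
        _ = ((∫ s in Set.Ioi (0:ℝ), g s : ℝ) : ℂ) :=
            Complex.ofRealCLM.integral_comp_comm hgint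
    rw [hval, Complex.zero_lt_real]
    rw [setIntegral_pos_iff_support_of_nonneg_ae
      (Filter.Eventually.of_forall fun s => (hgpos s).le) hgint]
    have hsupp : Function.support g ∩ Set.Ioi 0 = Set.Ioi 0 :=
      Set.inter_eq_self_of_subset_right fun s _ => (hgpos s).ne'
    rw [hsupp, Real.volume_Ioi]
    exact ENNReal.zero_lt_top
  refine ⟨hint, hherm, hpos, ?_⟩
  rw [add_comm]
  exact hmain
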